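/- arXiv:math/0404050 — 6 statements merged into one kernel-verified Lean document; each statement's English description precedes it below -/
import Mathlib

section
/- Let (x_j) be a sequence of positive real numbers with partial sums S_n = x_1 + ... + x_n. If liminf_{n→∞} S_n / n^{1/2} = c, then liminf_{n→∞} (log n)^{-1} ∑_{j=1}^n x_j^2 ≥ c^2 / 4. -/
open Filter Finset

private lemma abel_sum (f a : ℕ → ℝ) (n : ℕ) :
    ∑ j ∈ Icc 1 n, f j * a j
      = (∑ j ∈ Icc 1 n, f j) * a (n+1)
        + ∑ j ∈ Icc 1 n, (∑ i ∈ Icc 1 j, f i) * (a j - a (j+1)) := by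
  induction n with
  | zero => simp
  | succ n ih =>
    rw [Finset.sum_Icc_succ_top (by omega) (fun j => f j * a j),
        Finset.sum_Icc_succ_top (by omega) f,
        Finset.sum_Icc_succ_top (by omega) (fun j => (∑ i ∈ Icc 1 j, f i) * (a j - a (j+1))),
        ih, Finset.sum_Icc_succ_top (by omega) f]
    ring

private lemma sum_inv_lower (N : ℕ) : ∀ n, N ≤ n →
    Real.log (n+2) - Real.log (N+2) ≤ ∑ j ∈ Icc N n, ((j:ℝ)+1)⁻¹ := by
  intro n hn
  induction n, hn using Nat.le_induction with
  | base => simp; positivity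
  | succ n hn ih =>
    rw [Finset.sum_Icc_succ_top (by omega)]
    have h1 : Real.log ((n:ℝ)+1+2) - Real.log ((n:ℝ)+2) ≤ ((n:ℝ)+1+1)⁻¹ := by
      rw [← Real.log_div (by positivity) (by positivity)]
      have h0 := Real.log_le_sub_one_of_pos (x := ((n:ℝ)+1+2)/((n:ℝ)+2)) (by positivity)
      have h2 : ((n:ℝ)+1+2)/((n:ℝ)+2) - 1 = ((n:ℝ)+1+1)⁻¹ := by
        field_simp; ring
      linarith
    push_cast
    linarith

private lemma harmonic_upper : ∀ n : ℕ, 1 ≤ n → ∑ k ∈ Icc 1 n, ((k:ℝ))⁻¹ ≤ 1 + Real.log n := by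
  intro n hn
  induction n, hn using Nat.le_induction with
  | base => simp
  | succ n hn ih =>
    rw [Finset.sum_Icc_succ_top (by omega)]
    have hn1 : (1:ℝ) ≤ (n:ℝ) := by exact_mod_cast hn
    have h1 : ((n:ℝ)+1)⁻¹ ≤ Real.log ((n:ℝ)+1) - Real.log n := by
      have h0 := Real.log_le_sub_one_of_pos (x := (n:ℝ)/((n:ℝ)+1)) (by positivity)
      rw [Real.log_div (by positivity) (by positivity)] at h0
      have h2 : (n:ℝ)/((n:ℝ)+1) - 1 = -((n:ℝ)+1)⁻¹ := by
        field_simp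
        ring
      linarith
    push_cast
    linarith

private lemma sqrt_gap (j : ℕ) (hj : 1 ≤ j) :
    (2*((j:ℝ)+1))⁻¹ ≤ Real.sqrt j * ((Real.sqrt j)⁻¹ - (Real.sqrt ((j:ℝ)+1))⁻¹) := by
  have hs1 : (0:ℝ) < Real.sqrt ((j:ℝ)+1) := Real.sqrt_pos.2 (by positivity)
  have hsq1 : Real.sqrt ((j:ℝ)+1) ^ 2 = (j:ℝ)+1 := Real.sq_sqrt (by positivity)
  have key : Real.sqrt j ≤ Real.sqrt ((j:ℝ)+1) - (2 * Real.sqrt ((j:ℝ)+1))⁻¹ := by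
    have hrhs : Real.sqrt ((j:ℝ)+1) - (2 * Real.sqrt ((j:ℝ)+1))⁻¹
        = (2*(j:ℝ)+1) / (2 * Real.sqrt ((j:ℝ)+1)) := by
      field_simp
      nlinarith [hsq1]
    rw [hrhs]
    have hpos : (0:ℝ) ≤ (2*(j:ℝ)+1) / (2 * Real.sqrt ((j:ℝ)+1)) := by positivity
    have hle : (j:ℝ) ≤ ((2*(j:ℝ)+1) / (2 * Real.sqrt ((j:ℝ)+1)))^2 := by
      rw [div_pow, le_div_iff₀ (by positivity)]
      nlinarith [hsq1]
    calc Real.sqrt j ≤ Real.sqrt (((2*(j:ℝ)+1) / (2 * Real.sqrt ((j:ℝ)+1)))^2) :=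
          Real.sqrt_le_sqrt hle
      _ = (2*(j:ℝ)+1) / (2 * Real.sqrt ((j:ℝ)+1)) := Real.sqrt_sq hpos
  have hj1 : (1:ℝ) ≤ (j:ℝ) := by exact_mod_cast hj
  have hsj : (0:ℝ) < Real.sqrt j := Real.sqrt_pos.2 (by positivity)
  have hsqj : Real.sqrt j ^ 2 = (j:ℝ) := Real.sq_sqrt (by positivity)
  have expand : Real.sqrt j * ((Real.sqrt j)⁻¹ - (Real.sqrt ((j:ℝ)+1))⁻¹)
      = 1 - Real.sqrt j / Real.sqrt ((j:ℝ)+1) := by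
    field_simp
  rw [expand]
  have h2 : Real.sqrt j / Real.sqrt ((j:ℝ)+1) ≤ 1 - (2*((j:ℝ)+1))⁻¹ := by
    rw [div_le_iff₀ hs1]
    calc Real.sqrt j ≤ Real.sqrt ((j:ℝ)+1) - (2 * Real.sqrt ((j:ℝ)+1))⁻¹ := key
      _ = (1 - (2*((j:ℝ)+1))⁻¹) * Real.sqrt ((j:ℝ)+1) := by
          field_simp
          nlinarith [hsq1]
  linarith

private lemma main_bound (x : ℕ → ℝ) (hx : ∀ j, 1 ≤ j → 0 < x j) (c ε : ℝ)
    (hc : 0 < c) (hε : 0 < ε) (hεc : ε < c) (N : ℕ) (hN : 1 ≤ N)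
    (hS : ∀ n, N ≤ n → (c - ε) * Real.sqrt n ≤ ∑ j ∈ Icc 1 n, x j) :
    ∀ n, N ≤ n →
      (c^2/4 - c*ε/2) * Real.log n - (c*(c-ε)/2 * Real.log (N+2) + c^2/4)
        ≤ ∑ j ∈ Icc 1 n, (x j)^2 := by
  intro n hn
  have hn1 : 1 ≤ n := le_trans hN hn
  set a : ℕ → ℝ := fun j => (Real.sqrt j)⁻¹ with ha
  -- pointwise bound
  have pw : ∀ j ∈ Icc 1 n, c * (x j * a j) - c^2/4 * (j:ℝ)⁻¹ ≤ (x j)^2 := by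
    intro j hj
    obtain ⟨hj1, -⟩ := Finset.mem_Icc.1 hj
    have hj1' : (1:ℝ) ≤ (j:ℝ) := by exact_mod_cast hj1
    have hsj : (0:ℝ) < Real.sqrt j := Real.sqrt_pos.2 (by linarith)
    have hsqj : Real.sqrt j ^ 2 = (j:ℝ) := Real.sq_sqrt (by linarith)
    have hinv : (a j)^2 = (j:ℝ)⁻¹ := by
      have haj : a j = (Real.sqrt j)⁻¹ := rfl
      rw [haj, inv_pow, hsqj]
    have := sq_nonneg (x j - (c/2) * a j)
    nlinarith [this, hinv]
  have step1 : c * (∑ j ∈ Icc 1 n, x j * a j) - c^2/4 * (∑ j ∈ Icc 1 n, ((j:ℝ))⁻¹)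
      ≤ ∑ j ∈ Icc 1 n, (x j)^2 := by
    rw [Finset.mul_sum, Finset.mul_sum, ← Finset.sum_sub_distrib]
    exact Finset.sum_le_sum pw
  -- Abel
  have abel := abel_sum x a n
  -- boundary term nonneg
  have hSpos : ∀ m : ℕ, 0 ≤ ∑ i ∈ Icc 1 m, x i := by
    intro m
    apply Finset.sum_nonneg
    intro i hi
    exact le_of_lt (hx i (Finset.mem_Icc.1 hi).1)
  have hbd : 0 ≤ (∑ j ∈ Icc 1 n, x j) * a (n+1) := by
    apply mul_nonneg (hSpos n)
    rw [ha]; positivity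
  -- sum over Icc N n lower bound
  have hadec : ∀ j : ℕ, 1 ≤ j → 0 ≤ a j - a (j+1) := by
    intro j hj
    have haj : a j = (Real.sqrt j)⁻¹ := rfl
    have haj1 : a (j+1) = (Real.sqrt (j+1:ℕ))⁻¹ := rfl
    rw [haj, haj1, sub_nonneg]
    apply inv_anti₀
    · exact Real.sqrt_pos.2 (by exact_mod_cast hj)
    · exact Real.sqrt_le_sqrt (by exact_mod_cast Nat.le_succ j)
  have hterm : ∀ j ∈ Icc N n,
      (c-ε) * (2*((j:ℝ)+1))⁻¹ ≤ (∑ i ∈ Icc 1 j, x i) * (a j - a (j+1)) := by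
    intro j hj
    obtain ⟨hjN, -⟩ := Finset.mem_Icc.1 hj
    have hj1 : 1 ≤ j := le_trans hN hjN
    have h1 : (c-ε) * Real.sqrt j ≤ ∑ i ∈ Icc 1 j, x i := hS j hjN
    have h2 := sqrt_gap j hj1
    have h3 : ((j:ℕ):ℝ)+1 = ((j+1:ℕ):ℝ) := by push_cast; ring
    calc (c-ε) * (2*((j:ℝ)+1))⁻¹
        ≤ (c-ε) * (Real.sqrt j * (a j - a (j+1))) := by
          apply mul_le_mul_of_nonneg_left _ (by linarith)
          rw [ha]
          simpa [← h3] using h2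
      _ = ((c-ε) * Real.sqrt j) * (a j - a (j+1)) := by ring
      _ ≤ (∑ i ∈ Icc 1 j, x i) * (a j - a (j+1)) :=
          mul_le_mul_of_nonneg_right h1 (hadec j hj1)
  have hsub : ∑ j ∈ Icc N n, (∑ i ∈ Icc 1 j, x i) * (a j - a (j+1))
      ≤ ∑ j ∈ Icc 1 n, (∑ i ∈ Icc 1 j, x i) * (a j - a (j+1)) := by
    apply Finset.sum_le_sum_of_subset_of_nonneg
    · apply Finset.Icc_subset_Icc_left hN
    · intro j hj _
      exact mul_nonneg (hSpos j) (hadec j (Finset.mem_Icc.1 hj).1)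
  have hhalf : ∑ j ∈ Icc N n, (c-ε) * (2*((j:ℝ)+1))⁻¹
      = (c-ε)/2 * ∑ j ∈ Icc N n, ((j:ℝ)+1)⁻¹ := by
    rw [Finset.mul_sum]
    apply Finset.sum_congr rfl
    intro j hj
    rw [mul_inv]
    ring
  have hlog : Real.log (n+2) - Real.log (N+2) ≤ ∑ j ∈ Icc N n, ((j:ℝ)+1)⁻¹ :=
    sum_inv_lower N n hn
  -- T lower bound
  have hT : (c-ε)/2 * (Real.log (n+2) - Real.log (N+2)) ≤ ∑ j ∈ Icc 1 n, x j * a j := by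
    rw [abel]
    have e1 : (c-ε)/2 * (Real.log (n+2) - Real.log (N+2))
        ≤ (c-ε)/2 * ∑ j ∈ Icc N n, ((j:ℝ)+1)⁻¹ :=
      mul_le_mul_of_nonneg_left hlog (by linarith)
    have e2 : (c-ε)/2 * ∑ j ∈ Icc N n, ((j:ℝ)+1)⁻¹
        ≤ ∑ j ∈ Icc N n, (∑ i ∈ Icc 1 j, x i) * (a j - a (j+1)) := by
      rw [← hhalf]
      exact Finset.sum_le_sum hterm
    linarith
  have hH : ∑ k ∈ Icc 1 n, ((k:ℝ))⁻¹ ≤ 1 + Real.log n := harmonic_upper n hn1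
  have hlogmono : Real.log n ≤ Real.log (n+2) := by
    apply Real.log_le_log (by positivity)
    push_cast; linarith
  have hcpos : 0 ≤ c*(c-ε)/2 := by nlinarith
  nlinarith [mul_le_mul_of_nonneg_left hT (le_of_lt hc),
    mul_le_mul_of_nonneg_left hlogmono hcpos,
    mul_le_mul_of_nonneg_left hH (by positivity : (0:ℝ) ≤ c^2/4)]

/-- If `x` is a sequence of positive reals with partial sums `S n = ∑_{j=1}^n x j` satisfying
`liminf S n / √n = c`, then `liminf (log n)⁻¹ ∑_{j=1}^n (x j)^2 ≥ c^2 / 4`. -/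
theorem stmt0 (x : ℕ → ℝ) (hx : ∀ j, 1 ≤ j → 0 < x j) (c : ℝ)
    (hliminf : Filter.liminf
      (fun n : ℕ => (((∑ j ∈ Finset.Icc 1 n, x j) / Real.sqrt n : ℝ) : EReal)) atTop
      = (c : EReal)) :
    ((c ^ 2 / 4 : ℝ) : EReal) ≤
      Filter.liminf
        (fun n : ℕ => (((∑ j ∈ Finset.Icc 1 n, (x j) ^ 2) / Real.log n : ℝ) : EReal)) atTop := by
  have hSpos : ∀ m : ℕ, 0 ≤ ∑ i ∈ Icc 1 m, x i := by
    intro m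
    exact Finset.sum_nonneg fun i hi => le_of_lt (hx i (Finset.mem_Icc.1 hi).1)
  have gnonneg : ∀ n : ℕ,
      (0 : EReal) ≤ (((∑ j ∈ Finset.Icc 1 n, (x j) ^ 2) / Real.log n : ℝ) : EReal) := by
    intro n
    have h1 : (0:ℝ) ≤ (∑ j ∈ Finset.Icc 1 n, (x j) ^ 2) / Real.log n := by
      apply div_nonneg (Finset.sum_nonneg fun i _ => sq_nonneg _)
      rcases Nat.eq_zero_or_pos n with h | h
      · subst h; simp
      · exact Real.log_nonneg (by exact_mod_cast h)
    exact_mod_cast h1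
  -- c is nonnegative
  have hc0 : 0 ≤ c := by
    have h1 : (0 : EReal) ≤ Filter.liminf
        (fun n : ℕ => (((∑ j ∈ Finset.Icc 1 n, x j) / Real.sqrt n : ℝ) : EReal)) atTop := by
      refine Filter.le_liminf_of_le (by isBoundedDefault) ?_
      filter_upwards with n
      have : (0:ℝ) ≤ (∑ j ∈ Finset.Icc 1 n, x j) / Real.sqrt n :=
        div_nonneg (hSpos n) (Real.sqrt_nonneg _)
      exact_mod_cast this
    rw [hliminf] at h1
    exact_mod_cast h1
  rcases eq_or_lt_of_le hc0 with hc | hc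
  · -- c = 0
    have : ((c ^ 2 / 4 : ℝ) : EReal) = (0 : EReal) := by
      rw [← hc]; norm_num
    rw [this]
    refine Filter.le_liminf_of_le (by isBoundedDefault) ?_
    filter_upwards with n using gnonneg n
  · -- c > 0
    rw [Filter.le_liminf_iff]
    intro b hb
    obtain ⟨r, hbr, hrc⟩ := EReal.exists_between_coe_real hb
    have hr : r < c^2/4 := by exact_mod_cast hrc
    set ε : ℝ := min (c/2) ((c^2/4 - r)/c) with hε
    have hεpos : 0 < ε := lt_min (by linarith) (div_pos (by linarith) hc)
    have hεc : ε < c := lt_of_le_of_lt (min_le_left _ _) (by linarith)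
    have hεr : c * ε ≤ c^2/4 - r := by
      have h1 : ε ≤ (c^2/4 - r)/c := min_le_right _ _
      calc c * ε ≤ c * ((c^2/4 - r)/c) := mul_le_mul_of_nonneg_left h1 hc.le
        _ = c^2/4 - r := by field_simp
    -- eventual lower bound on partial sums
    have hlt : ((c - ε : ℝ) : EReal) < Filter.liminf
        (fun n : ℕ => (((∑ j ∈ Finset.Icc 1 n, x j) / Real.sqrt n : ℝ) : EReal)) atTop := by
      rw [hliminf]
      exact_mod_cast sub_lt_self c hεpos
    obtain ⟨N0, hN0⟩ := Filter.eventually_atTop.1 (Filter.eventually_lt_of_lt_liminf hlt)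
    set N : ℕ := max N0 1 with hNdef
    have hN1 : 1 ≤ N := le_max_right _ _
    have hS : ∀ n, N ≤ n → (c - ε) * Real.sqrt n ≤ ∑ j ∈ Icc 1 n, x j := by
      intro n hn
      have hn1 : 1 ≤ n := le_trans hN1 hn
      have h1 := hN0 n (le_trans (le_max_left _ _) hn)
      have h2 : (c - ε) < (∑ j ∈ Finset.Icc 1 n, x j) / Real.sqrt n := by exact_mod_cast h1
      have hsq : (0:ℝ) < Real.sqrt n := Real.sqrt_pos.2 (by exact_mod_cast hn1)
      have := (lt_div_iff₀ hsq).1 h2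
      linarith
    have key := main_bound x hx c ε hc hεpos hεc N hN1 hS
    set A : ℝ := c^2/4 - c*ε/2 with hA
    set C : ℝ := c*(c-ε)/2 * Real.log (N+2) + c^2/4 with hC
    set δ : ℝ := A - r with hδ
    have hδpos : 0 < δ := by
      rw [hδ, hA]; linarith
    set K : ℝ := |C|/δ + 1 with hK
    have hδK : δ * K = |C| + δ := by
      rw [hK]; field_simp
    have hlogev : ∀ᶠ n : ℕ in atTop, K ≤ Real.log n :=
      (Real.tendsto_log_atTop.comp tendsto_natCast_atTop_atTop).eventually_ge_atTop K
    filter_upwards [hlogev, Filter.eventually_ge_atTop N] with n hlog hn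
    have hK1 : (1:ℝ) ≤ K := by
      rw [hK]; have : 0 ≤ |C|/δ := by positivity
      linarith
    have hL : (0:ℝ) < Real.log n := lt_of_lt_of_le (by linarith) hlog
    have hQ := key n hn
    have hCL : C < δ * Real.log n := by
      have h1 : δ * K ≤ δ * Real.log n := mul_le_mul_of_nonneg_left hlog hδpos.le
      have h2 : C ≤ |C| := le_abs_self C
      linarith
    have h3 : r < (A * Real.log n - C) / Real.log n := by
      rw [lt_div_iff₀ hL]
      have : δ * Real.log n = (A - r) * Real.log n := by rw [hδ]
      nlinarith
    have h4 : (A * Real.log n - C) / Real.log n ≤ (∑ j ∈ Icc 1 n, (x j)^2) / Real.log n :=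
      (div_le_div_iff_of_pos_right hL).2 hQ
    have h5 : r < (∑ j ∈ Finset.Icc 1 n, (x j) ^ 2) / Real.log n := lt_of_lt_of_le h3 h4
    calc b < (r : EReal) := hbr
      _ < _ := by exact_mod_cast h5
end

section
/- Let (x_j) be positive reals with partial sums S_n satisfying S_n ≥ a·n^{1/2} for all n ≥ 1, where a > 0. Then for all n ≥ 2, ∑_{j=1}^n x_j^2 ≥ a^2 (log n) / 4. -/
open Finset

private lemma key_abel (x : ℕ → ℝ) (a : ℝ) (ha : 0 < a)
    (hS : ∀ n : ℕ, 1 ≤ n → a * Real.sqrt n ≤ ∑ j ∈ Finset.Icc 1 n, x j) :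
    ∀ n : ℕ, 1 ≤ n →
      (∑ j ∈ Finset.Icc 1 n, x j) / Real.sqrt n
        + a / 2 * ((∑ j ∈ Finset.Icc 1 n, (j : ℝ)⁻¹) - 1)
      ≤ ∑ j ∈ Finset.Icc 1 n, x j / Real.sqrt j := by
  intro n hn
  induction n, hn using Nat.le_induction with
  | base => simp
  | succ n hn ih =>
    have hs : (0:ℝ) < Real.sqrt n := Real.sqrt_pos.mpr (by positivity)
    have ht : (0:ℝ) < Real.sqrt (n+1) := Real.sqrt_pos.mpr (by positivity)
    have hs2 : Real.sqrt n * Real.sqrt n = n := Real.mul_self_sqrt (by positivity)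
    have ht2 : Real.sqrt (n+1) * Real.sqrt (n+1) = (n:ℝ)+1 :=
      Real.mul_self_sqrt (by positivity)
    have hst : Real.sqrt n < Real.sqrt (n+1) := by
      apply Real.sqrt_lt_sqrt (by positivity); push_cast; linarith
    have hSn := hS n hn
    have hstep : (∑ j ∈ Finset.Icc 1 n, x j) / Real.sqrt n ≥
        (∑ j ∈ Finset.Icc 1 n, x j) / Real.sqrt (n+1) + a / (2 * ((n:ℝ)+1)) := by
      set S := ∑ j ∈ Finset.Icc 1 n, x j with hSdef
      have hkey : a * Real.sqrt n * (1 / Real.sqrt n - 1 / Real.sqrt (n+1))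
          ≥ a / (2 * ((n:ℝ)+1)) := by
        rw [ge_iff_le, div_le_iff₀ (by positivity)]
        have h2 : 2 * (Real.sqrt n * Real.sqrt (n+1)) ≤ 2*(n:ℝ)+1 := by
          nlinarith [sq_nonneg (Real.sqrt (n+1) - Real.sqrt n), hs.le, ht.le]
        have e : a * Real.sqrt n * (1 / Real.sqrt n - 1 / Real.sqrt (n+1)) * (2 * ((n:ℝ)+1))
            = a * (2 * ((n:ℝ)+1) * (Real.sqrt (n+1) - Real.sqrt n)) / Real.sqrt (n+1) := by
          field_simp
        rw [e, le_div_iff₀ ht]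
        have h2' : (0:ℝ) ≤ 2*(Real.sqrt (n+1)*Real.sqrt (n+1))
            - 2*(Real.sqrt n*Real.sqrt (n+1)) - 1 := by
          rw [ht2]; linarith
        nth_rewrite 2 [← ht2]
        nlinarith [mul_nonneg (mul_nonneg ha.le ht.le) h2']
      have hmono : S * (1 / Real.sqrt n - 1 / Real.sqrt (n+1))
          ≥ a * Real.sqrt n * (1 / Real.sqrt n - 1 / Real.sqrt (n+1)) := by
        apply mul_le_mul_of_nonneg_right hSn
        have : 1 / Real.sqrt (n+1) < 1 / Real.sqrt n := by
          apply one_div_lt_one_div_of_lt hs hst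
        linarith
      have : S / Real.sqrt n - S / Real.sqrt (n+1)
          = S * (1 / Real.sqrt n - 1 / Real.sqrt (n+1)) := by ring
      linarith
    rw [Finset.sum_Icc_succ_top (by omega : 1 ≤ n+1),
        Finset.sum_Icc_succ_top (by omega : 1 ≤ n+1),
        Finset.sum_Icc_succ_top (by omega : 1 ≤ n+1)]
    push_cast
    have hxd : ((∑ j ∈ Finset.Icc 1 n, x j) + x (n+1)) / Real.sqrt (↑n+1)
        = (∑ j ∈ Finset.Icc 1 n, x j) / Real.sqrt (↑n+1) + x (n+1) / Real.sqrt (↑n+1) := by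
      ring
    rw [hxd]
    have hinv : a / 2 * ((∑ j ∈ Finset.Icc 1 n, (j:ℝ)⁻¹ + ((n:ℝ)+1)⁻¹) - 1)
        = a / 2 * ((∑ j ∈ Finset.Icc 1 n, (j:ℝ)⁻¹) - 1) + a / (2 * ((n:ℝ)+1)) := by
      field_simp; ring
    rw [hinv]
    push_cast at hstep ⊢
    linarith

/-- If `x` is a sequence of positive reals whose partial sums satisfy `S n ≥ a √n` for all
`n ≥ 1` (with `a > 0`), then `∑_{j=1}^n (x j)^2 ≥ a^2 (log n) / 4` for all `n ≥ 2`. -/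
theorem stmt1 (x : ℕ → ℝ) (hx : ∀ j, 1 ≤ j → 0 < x j) (a : ℝ) (ha : 0 < a)
    (hS : ∀ n : ℕ, 1 ≤ n → a * Real.sqrt n ≤ ∑ j ∈ Finset.Icc 1 n, x j) :
    ∀ n : ℕ, 2 ≤ n → a ^ 2 * Real.log n / 4 ≤ ∑ j ∈ Finset.Icc 1 n, (x j) ^ 2 := by
  intro n hn
  have hn1 : 1 ≤ n := by omega
  set H : ℝ := ∑ j ∈ Finset.Icc 1 n, (j : ℝ)⁻¹ with hHdef
  -- pointwise bound
  have hpt : ∀ j ∈ Finset.Icc 1 n,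
      a * (x j / Real.sqrt j) - a^2 / 4 * (j:ℝ)⁻¹ ≤ (x j)^2 := by
    intro j hj
    simp only [Finset.mem_Icc] at hj
    have hj1 : (1:ℝ) ≤ (j:ℝ) := by exact_mod_cast hj.1
    have hsj : (0:ℝ) < Real.sqrt j := Real.sqrt_pos.mpr (by linarith)
    have hsj2 : Real.sqrt j * Real.sqrt j = (j:ℝ) := Real.mul_self_sqrt (by linarith)
    set u := (Real.sqrt j)⁻¹ with hu
    have hju : x j / Real.sqrt j = x j * u := by rw [hu, div_eq_mul_inv]
    have hjinv : (j:ℝ)⁻¹ = u * u := by rw [hu, ← mul_inv, hsj2]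
    rw [hju, hjinv]
    nlinarith [sq_nonneg (x j - a/2*u)]
  have hsum1 : ∑ j ∈ Finset.Icc 1 n, (a * (x j / Real.sqrt j) - a^2 / 4 * (j:ℝ)⁻¹)
      ≤ ∑ j ∈ Finset.Icc 1 n, (x j)^2 := Finset.sum_le_sum hpt
  rw [Finset.sum_sub_distrib, ← Finset.mul_sum, ← Finset.mul_sum] at hsum1
  have habel := key_abel x a ha hS n hn1
  have hsn : (0:ℝ) < Real.sqrt n := Real.sqrt_pos.mpr (by positivity)
  have hS' : a ≤ (∑ j ∈ Finset.Icc 1 n, x j) / Real.sqrt n := by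
    rw [le_div_iff₀ hsn]; exact hS n hn1
  -- combine: ∑ x² ≥ a*(a + a/2*(H-1)) - a²/4*H = a²/4*H + a²/2 ≥ a²/4*H
  have h1 : a * (a + a / 2 * (H - 1)) ≤ a * ∑ j ∈ Finset.Icc 1 n, x j / Real.sqrt j := by
    apply mul_le_mul_of_nonneg_left _ ha.le
    calc a + a / 2 * (H - 1) ≤ (∑ j ∈ Finset.Icc 1 n, x j) / Real.sqrt n
          + a / 2 * (H - 1) := by linarith
      _ ≤ _ := habel
  have hHlog : Real.log n ≤ H := by
    have h2 : Real.log n ≤ Real.log (n+1) := by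
      apply Real.log_le_log (by positivity); push_cast; linarith
    have h3 := log_add_one_le_harmonic n
    have h4 : ((harmonic n : ℚ) : ℝ) = H := by
      rw [hHdef, harmonic_eq_sum_Icc]; push_cast; ring
    rw [h4] at h3
    push_cast at h3
    linarith
  nlinarith [sq_nonneg a]
end

section
/- Let x_1 ≥ x_2 ≥ ... ≥ x_n > 0 be a nonincreasing finite sequence of positive reals with partial sums S_k = x_1 + ... + x_k satisfying S_k ≥ a·k^{1/2} for all 1 ≤ k ≤ n, where a > 0. Then ∑_{j=1}^n x_j^2 ≥ a ∑_{j=1}^n q_j x_j, where q_j := j^{1/2} − (j−1)^{1/2}. -/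
open Finset

lemma aux5 (x : ℕ → ℝ) (a : ℝ) (ha : 0 < a) :
    ∀ n, 1 ≤ n → (∀ j, 1 ≤ j → j ≤ n → 0 < x j) →
    (∀ i j, 1 ≤ i → i ≤ j → j ≤ n → x j ≤ x i) →
    (∀ k, 1 ≤ k → k ≤ n → a * Real.sqrt k ≤ ∑ j ∈ Finset.Icc 1 k, x j) →
    a * ∑ j ∈ Finset.Icc 1 n, (Real.sqrt j - Real.sqrt ((j : ℝ) - 1)) * x j ≤
      ∑ j ∈ Finset.Icc 1 n, (x j) ^ 2
        - (∑ j ∈ Finset.Icc 1 n, x j - a * Real.sqrt n) * x n := by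
  intro n hn
  induction n, hn using Nat.le_induction with
  | base =>
    intro hpos hmono hS
    simp only [Finset.Icc_self, Finset.sum_singleton, Nat.cast_one]
    rw [show (1:ℝ) - 1 = 0 by ring, Real.sqrt_zero, Real.sqrt_one]
    ring_nf
    nlinarith [hpos 1 le_rfl le_rfl]
  | succ n hn ih =>
    intro hpos hmono hS
    have hIH := ih (fun j h1 h2 => hpos j h1 (h2.trans (Nat.le_succ n)))
      (fun i j h1 h2 h3 => hmono i j h1 h2 (h3.trans (Nat.le_succ n)))
      (fun k h1 h2 => hS k h1 (h2.trans (Nat.le_succ n)))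
    rw [Finset.sum_Icc_succ_top (by omega : 1 ≤ n + 1),
        Finset.sum_Icc_succ_top (by omega : 1 ≤ n + 1),
        Finset.sum_Icc_succ_top (by omega : 1 ≤ n + 1)]
    have hcast : ((n + 1 : ℕ) : ℝ) - 1 = (n : ℝ) := by push_cast; ring
    rw [hcast]
    have hSn : a * Real.sqrt n ≤ ∑ j ∈ Finset.Icc 1 n, x j := hS n hn (Nat.le_succ n)
    have hxm : x (n + 1) ≤ x n := hmono n (n + 1) hn (Nat.le_succ n) le_rfl
    have hsqle : Real.sqrt n ≤ Real.sqrt ((n : ℕ) + 1 : ℕ) := by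
      apply Real.sqrt_le_sqrt; push_cast; linarith
    nlinarith [hIH, mul_nonneg (sub_nonneg.2 hSn) (sub_nonneg.2 hxm)]

/-- If `x 1 ≥ x 2 ≥ ... ≥ x n > 0` is nonincreasing with partial sums `S k ≥ a √k` for
`1 ≤ k ≤ n` (with `a > 0`), then `∑_{j=1}^n (x j)^2 ≥ a ∑_{j=1}^n q j * x j`,
where `q j := √j − √(j-1)`. -/
theorem stmt5 (n : ℕ) (x : ℕ → ℝ) (hpos : ∀ j, 1 ≤ j → j ≤ n → 0 < x j)
    (hmono : ∀ i j, 1 ≤ i → i ≤ j → j ≤ n → x j ≤ x i)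
    (a : ℝ) (ha : 0 < a)
    (hS : ∀ k, 1 ≤ k → k ≤ n → a * Real.sqrt k ≤ ∑ j ∈ Finset.Icc 1 k, x j) :
    a * ∑ j ∈ Finset.Icc 1 n, (Real.sqrt j - Real.sqrt ((j : ℝ) - 1)) * x j ≤
      ∑ j ∈ Finset.Icc 1 n, (x j) ^ 2 := by
  rcases Nat.eq_zero_or_pos n with rfl | hn
  · simp
  · have h := aux5 x a ha n hn hpos hmono hS
    have h1 : 0 ≤ (∑ j ∈ Finset.Icc 1 n, x j - a * Real.sqrt n) * x n :=
      mul_nonneg (sub_nonneg.2 (hS n hn le_rfl)) (hpos n hn le_rfl).le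
    linarith
end

section
/- Let x_1 ≥ x_2 ≥ ... ≥ x_n > 0 be nonincreasing positive reals with partial sums S_k ≥ a·k^{1/2} for all 1 ≤ k ≤ n, where a > 0, and let q_j := j^{1/2} − (j−1)^{1/2}. Then ∑_{j=1}^n q_j x_j ≥ a ∑_{k=1}^n q_k^2. -/
open Finset

/-- If `x 1 ≥ ... ≥ x n > 0` is nonincreasing with partial sums `S k ≥ a √k` for
`1 ≤ k ≤ n` (with `a > 0`), and `q j := √j − √(j-1)`, then
`∑_{j=1}^n q j * x j ≥ a ∑_{k=1}^n (q k)^2`. -/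
theorem stmt6 (n : ℕ) (x : ℕ → ℝ) (hpos : ∀ j, 1 ≤ j → j ≤ n → 0 < x j)
    (hmono : ∀ i j, 1 ≤ i → i ≤ j → j ≤ n → x j ≤ x i)
    (a : ℝ) (ha : 0 < a)
    (hS : ∀ k, 1 ≤ k → k ≤ n → a * Real.sqrt k ≤ ∑ j ∈ Finset.Icc 1 k, x j) :
    a * ∑ k ∈ Finset.Icc 1 n, (Real.sqrt k - Real.sqrt ((k : ℝ) - 1)) ^ 2 ≤
      ∑ j ∈ Finset.Icc 1 n, (Real.sqrt j - Real.sqrt ((j : ℝ) - 1)) * x j := by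
  set q : ℕ → ℝ := fun j => Real.sqrt j - Real.sqrt ((j : ℝ) - 1) with hqdef
  have hq0 : ∀ j : ℕ, 0 ≤ q j := by
    intro j
    have h : ((j : ℝ) - 1) ≤ (j : ℝ) := by linarith
    simpa [hqdef] using sub_nonneg.mpr (Real.sqrt_le_sqrt h)
  have hcast : ∀ m : ℕ, ((m + 1 : ℕ) : ℝ) - 1 = (m : ℝ) := by
    intro m; push_cast; ring
  have hqsucc : ∀ m : ℕ, q (m + 1) = Real.sqrt ((m : ℝ) + 1) - Real.sqrt m := by
    intro m
    simp only [hqdef]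
    rw [hcast]
    push_cast
    ring_nf
  have hqmono : ∀ m : ℕ, 1 ≤ m → q (m + 1) ≤ q m := by
    intro m hm
    have hm1 : (1 : ℝ) ≤ (m : ℝ) := by exact_mod_cast hm
    set s1 := Real.sqrt ((m : ℝ) + 1) with hs1
    set s2 := Real.sqrt (m : ℝ) with hs2
    set s3 := Real.sqrt ((m : ℝ) - 1) with hs3
    have h1 : s1 ^ 2 = (m : ℝ) + 1 := Real.sq_sqrt (by linarith)
    have h2 : s2 ^ 2 = (m : ℝ) := Real.sq_sqrt (by linarith)
    have h3 : s3 ^ 2 = (m : ℝ) - 1 := Real.sq_sqrt (by linarith)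
    have hn1 : 0 ≤ s1 := Real.sqrt_nonneg _
    have hn2 : 0 ≤ s2 := Real.sqrt_nonneg _
    have hn3 : 0 ≤ s3 := Real.sqrt_nonneg _
    have hprod : s1 * s3 ≤ (m : ℝ) := by
      nlinarith [sq_nonneg (s1 * s3 - (m : ℝ)), sq_nonneg (s1 * s3 + (m : ℝ)),
        mul_nonneg hn1 hn3]
    have key : s1 + s3 ≤ 2 * s2 := by
      nlinarith [mul_nonneg hn1 hn3, sq_nonneg (s1 + s3 - 2 * s2),
        sq_nonneg (s1 + s3 + 2 * s2)]
    rw [hqsucc m]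
    simp only [hqdef]
    linarith
  have key : ∀ m : ℕ, 1 ≤ m → m ≤ n →
      a * ∑ k ∈ Finset.Icc 1 m, q k ^ 2
        + q m * ((∑ j ∈ Finset.Icc 1 m, x j) - a * Real.sqrt m)
      ≤ ∑ j ∈ Finset.Icc 1 m, q j * x j := by
    intro m
    induction m with
    | zero => intro h; omega
    | succ m ih =>
      intro _ hmn
      rcases Nat.eq_zero_or_pos m with rfl | hm
      · -- base case m+1 = 1
        have hq1 : q 1 = 1 := by
          simp [hqdef, Real.sqrt_one]
        simp [hq1, Real.sqrt_one]
      · have hmn' : m ≤ n := by omega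
        have IH := ih hm hmn'
        have hSm := hS m hm hmn'
        rw [Finset.sum_Icc_succ_top (by omega : 1 ≤ m + 1),
            Finset.sum_Icc_succ_top (by omega : 1 ≤ m + 1),
            Finset.sum_Icc_succ_top (by omega : 1 ≤ m + 1)]
        have hmono' : (q m - q (m + 1)) * ((∑ j ∈ Finset.Icc 1 m, x j) - a * Real.sqrt m) ≥ 0 :=
          mul_nonneg (by linarith [hqmono m hm]) (by linarith)
        have hid : q (m + 1) ^ 2 = q (m + 1) * Real.sqrt ((m : ℝ) + 1) - q (m + 1) * Real.sqrt m := by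
          rw [hqsucc m]; ring
        have hc : ((m + 1 : ℕ) : ℝ) = (m : ℝ) + 1 := by push_cast; ring
        rw [hc, hid]
        nlinarith [hq0 (m + 1)]
  rcases Nat.eq_zero_or_pos n with rfl | hn
  · simp
  · have h := key n hn le_rfl
    have hSn := hS n hn le_rfl
    have := mul_nonneg (hq0 n) (by linarith : (0:ℝ) ≤ (∑ j ∈ Finset.Icc 1 n, x j) - a * Real.sqrt n)
    simp only [hqdef] at h this ⊢
    linarith
end

section
/- Let (x_j) be positive reals with ∑_{j=1}^n x_j ≥ a n^{1/2} − b for all n, where a > 0 and b ≥ 0. Then liminf_{n→∞} (log n)^{-1} ∑_{j=1}^n x_j^2 ≥ a^2/4. -/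
open Filter Finset

noncomputable def gg (k : ℕ) : ℝ := (Real.sqrt k)⁻¹

lemma gg_pos {k : ℕ} (hk : 1 ≤ k) : 0 < gg k := by
  have : (0:ℝ) < Real.sqrt k := Real.sqrt_pos.mpr (by exact_mod_cast hk)
  exact inv_pos.mpr this

lemma gg_anti {k : ℕ} (hk : 1 ≤ k) : gg (k+1) ≤ gg k := by
  have h1 : (0:ℝ) < Real.sqrt k := Real.sqrt_pos.mpr (by exact_mod_cast hk)
  apply inv_anti₀ h1
  exact Real.sqrt_le_sqrt (by push_cast; linarith)

lemma aux_abel (x : ℕ → ℝ) (a b : ℝ)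
    (hS : ∀ n : ℕ, a * Real.sqrt n - b ≤ ∑ j ∈ Finset.Icc 1 n, x j) :
    ∀ n : ℕ, 1 ≤ n →
      gg n * (∑ j ∈ Finset.Icc 1 n, x j)
        + ∑ k ∈ Finset.Ico 1 n, (gg k - gg (k+1)) * (a * Real.sqrt k - b)
      ≤ ∑ j ∈ Finset.Icc 1 n, x j * gg j := by
  intro n hn
  induction n, hn using Nat.le_induction with
  | base => simp [gg, Real.sqrt_one]
  | succ n hn ih =>
    rw [Finset.sum_Icc_succ_top (by omega : 1 ≤ n + 1),
      Finset.sum_Icc_succ_top (by omega : 1 ≤ n + 1),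
      Finset.sum_Ico_succ_top (by omega : 1 ≤ n)]
    have key : (gg n - gg (n+1)) * (a * Real.sqrt n - b)
        ≤ (gg n - gg (n+1)) * (∑ j ∈ Finset.Icc 1 n, x j) :=
      mul_le_mul_of_nonneg_left (hS n) (by linarith [gg_anti hn])
    nlinarith [ih]

lemma aux_term (k : ℕ) (hk : 1 ≤ k) :
    ((2:ℝ) * ((k:ℝ)+1))⁻¹ ≤ (gg k - gg (k+1)) * Real.sqrt k := by
  set s := Real.sqrt k with hs'
  set t := Real.sqrt ((k:ℕ)+1 : ℕ) with ht'
  have hs : 0 < s := Real.sqrt_pos.mpr (by exact_mod_cast hk)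
  have ht : 0 < t := Real.sqrt_pos.mpr (by positivity)
  have hs2 : s * s = k := Real.mul_self_sqrt (by positivity)
  have ht2 : t * t = (k:ℝ) + 1 := by
    rw [ht', Real.mul_self_sqrt (by positivity)]; push_cast; ring
  have hst : s ≤ t := by
    rw [hs', ht']; exact Real.sqrt_le_sqrt (by push_cast; linarith)
  have hts : (t - s) * (t + s) = 1 := by nlinarith
  have h1 : gg k - gg (k+1) = (t - s) / (s * t) := by
    rw [gg, gg, ← hs', ← ht']
    field_simp
  have h2 : (t - s) / (s * t) * s = (t - s) / t := by
    field_simp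
  rw [h1, h2, le_div_iff₀ ht, inv_mul_eq_div, div_le_iff₀ (by positivity : (0:ℝ) < 2 * ((k:ℝ)+1))]
  nlinarith [mul_le_mul_of_nonneg_left hst (sub_nonneg.mpr hst)]

lemma aux_tel : ∀ n : ℕ, 1 ≤ n →
    ∑ k ∈ Finset.Ico 1 n, (gg k - gg (k+1)) = gg 1 - gg n := by
  intro n hn
  induction n, hn using Nat.le_induction with
  | base => simp
  | succ n hn ih =>
    rw [Finset.sum_Ico_succ_top (by omega : 1 ≤ n), ih]; ring

lemma aux_shift : ∀ n : ℕ, 1 ≤ n →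
    ∑ k ∈ Finset.Ico 1 n, ((k:ℝ)+1)⁻¹ = (∑ j ∈ Finset.Icc 1 n, (j:ℝ)⁻¹) - 1 := by
  intro n hn
  induction n, hn using Nat.le_induction with
  | base => norm_num
  | succ n hn ih =>
    rw [Finset.sum_Ico_succ_top (by omega : 1 ≤ n),
      Finset.sum_Icc_succ_top (by omega : 1 ≤ n + 1), ih]
    push_cast; ring

lemma aux_key (x : ℕ → ℝ) (a b : ℝ) (ha : 0 < a) (hb : 0 ≤ b)
    (hS : ∀ n : ℕ, a * Real.sqrt n - b ≤ ∑ j ∈ Finset.Icc 1 n, x j)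
    (n : ℕ) (hn : 1 ≤ n) :
    a^2/4 * (∑ j ∈ Finset.Icc 1 n, (j:ℝ)⁻¹) - 2*a*b ≤ ∑ j ∈ Finset.Icc 1 n, (x j)^2 := by
  set A := ∑ j ∈ Finset.Icc 1 n, x j * gg j with hA'
  set H := ∑ j ∈ Finset.Icc 1 n, (j:ℝ)⁻¹ with hH'
  set P := ∑ k ∈ Finset.Ico 1 n, (gg k - gg (k+1)) * Real.sqrt k with hP'
  -- step 1: T ≥ a*A - a^2/4 * H
  have h1 : a * A - a^2/4 * H ≤ ∑ j ∈ Finset.Icc 1 n, (x j)^2 := by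
    rw [hA', hH', Finset.mul_sum, Finset.mul_sum, ← Finset.sum_sub_distrib]
    apply Finset.sum_le_sum
    intro j hj
    have hj1 : 1 ≤ j := (Finset.mem_Icc.mp hj).1
    have hgg : gg j * gg j = (j:ℝ)⁻¹ := by
      rw [gg, ← mul_inv, Real.mul_self_sqrt (by positivity)]
    nlinarith [sq_nonneg (x j - a/2 * gg j)]
  -- step 2: Abel
  have h2 := aux_abel x a b hS n hn
  -- step 3: gg n * S n ≥ a - b
  have hsn : (1:ℝ) ≤ Real.sqrt n := by
    rw [show (1:ℝ) = Real.sqrt 1 by simp]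
    exact Real.sqrt_le_sqrt (by exact_mod_cast hn)
  have hggn : gg n ≤ 1 := by
    rw [gg]; exact inv_le_one_of_one_le₀ hsn
  have hggsn : gg n * Real.sqrt n = 1 := by
    rw [gg]; exact inv_mul_cancel₀ (by linarith)
  have h3 : a - b ≤ gg n * (∑ j ∈ Finset.Icc 1 n, x j) := by
    have := mul_le_mul_of_nonneg_left (hS n) (le_of_lt (gg_pos hn))
    nlinarith [gg_pos hn]
  -- step 4: expand R
  have h4 : ∑ k ∈ Finset.Ico 1 n, (gg k - gg (k+1)) * (a * Real.sqrt k - b)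
      = a * P - b * (gg 1 - gg n) := by
    rw [hP', ← aux_tel n hn, Finset.mul_sum, Finset.mul_sum, ← Finset.sum_sub_distrib]
    apply Finset.sum_congr rfl
    intro k _; ring
  -- step 5: P ≥ (H-1)/2
  have h5 : (H - 1)/2 ≤ P := by
    rw [hP', hH', ← aux_shift n hn, Finset.sum_div]
    apply Finset.sum_le_sum
    intro k hk
    have hk1 : 1 ≤ k := (Finset.mem_Ico.mp hk).1
    have := aux_term k hk1
    rw [mul_inv] at this
    linarith [this]
  have hQ : gg 1 - gg n ≤ 1 := by
    have := gg_pos hn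
    have : gg 1 = 1 := by simp [gg]
    nlinarith [gg_pos hn]
  -- combine
  have hA : a - b + (a * P - b * (gg 1 - gg n)) ≤ A := by
    rw [hA']; rw [h4] at h2; linarith
  have h6 : a * (a - b + (a * P - b * (gg 1 - gg n))) ≤ a * A :=
    mul_le_mul_of_nonneg_left hA ha.le
  nlinarith [mul_le_mul_of_nonneg_left h5 (by positivity : (0:ℝ) ≤ a^2),
    mul_le_mul_of_nonneg_left hQ (mul_nonneg ha.le hb), sq_nonneg a]

lemma aux_log (n : ℕ) : Real.log n ≤ ∑ j ∈ Finset.Icc 1 n, (j:ℝ)⁻¹ := by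
  have h1 := log_add_one_le_harmonic n
  have h2 : ((harmonic n : ℚ) : ℝ) = ∑ j ∈ Finset.Icc 1 n, (j:ℝ)⁻¹ := by
    rw [harmonic_eq_sum_Icc]; push_cast; rfl
  have h3 : Real.log n ≤ Real.log (↑(n+1)) := by
    rcases Nat.eq_zero_or_pos n with h | h
    · simp [h]
    · apply Real.log_le_log (by exact_mod_cast h); push_cast; linarith
  rw [h2] at h1
  linarith

/-- If `x` is a sequence of positive reals with `∑_{j=1}^n x j ≥ a √n − b` for all `n`
(with `a > 0`, `b ≥ 0`), then `liminf (log n)⁻¹ ∑_{j=1}^n (x j)^2 ≥ a^2/4`. -/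
theorem stmt13 (x : ℕ → ℝ) (hx : ∀ j, 1 ≤ j → 0 < x j) (a b : ℝ) (ha : 0 < a) (hb : 0 ≤ b)
    (hS : ∀ n : ℕ, a * Real.sqrt n - b ≤ ∑ j ∈ Finset.Icc 1 n, x j) :
    ((a ^ 2 / 4 : ℝ) : EReal) ≤
      Filter.liminf
        (fun n : ℕ => (((∑ j ∈ Finset.Icc 1 n, (x j) ^ 2) / Real.log n : ℝ) : EReal)) atTop := by
  set f : ℕ → ℝ := fun n => a ^ 2 / 4 - 2 * a * b * (Real.log n)⁻¹ with hf'
  have htend : Tendsto f atTop (nhds (a ^ 2 / 4)) := by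
    have h0 : Tendsto (fun n : ℕ => (Real.log n)⁻¹) atTop (nhds 0) :=
      (Real.tendsto_log_atTop.comp tendsto_natCast_atTop_atTop).inv_tendsto_atTop
    simpa [hf', sub_eq_add_neg] using (tendsto_const_nhds.sub ((h0.const_mul (2 * a * b))))
  have htendE : Tendsto (fun n : ℕ => ((f n : ℝ) : EReal)) atTop (nhds ((a ^ 2 / 4 : ℝ) : EReal)) :=
    EReal.tendsto_coe.mpr htend
  have hliminfE : Filter.liminf (fun n : ℕ => ((f n : ℝ) : EReal)) atTop = ((a ^ 2 / 4 : ℝ) : EReal) :=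
    htendE.liminf_eq
  rw [← hliminfE]
  have hle : (fun n : ℕ => ((f n : ℝ) : EReal)) ≤ᶠ[atTop]
      (fun n : ℕ => (((∑ j ∈ Finset.Icc 1 n, (x j) ^ 2) / Real.log n : ℝ) : EReal)) := by
    filter_upwards [Filter.eventually_ge_atTop 2] with n hn
    have hlog : 0 < Real.log n := Real.log_pos (by exact_mod_cast hn)
    have hkey := aux_key x a b ha hb hS n (by omega)
    have hH := aux_log n
    have h1 : (a^2/4) * Real.log n - 2*a*b ≤ ∑ j ∈ Finset.Icc 1 n, (x j)^2 := by
      nlinarith [sq_nonneg a]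
    have h2 : f n ≤ (∑ j ∈ Finset.Icc 1 n, (x j)^2) / Real.log n := by
      rw [hf', le_div_iff₀ hlog]
      have he : (a ^ 2 / 4 - 2 * a * b * (Real.log n)⁻¹) * Real.log n
          = a^2/4 * Real.log n - 2*a*b * ((Real.log n)⁻¹ * Real.log n) := by ring
      rw [he, inv_mul_cancel₀ (ne_of_gt hlog), mul_one]
      exact h1
    exact_mod_cast EReal.coe_le_coe_iff.mpr h2
  exact Filter.liminf_le_liminf hle
end

section
/- Suppose (Y_j) are positive reals with ∑_{j=1}^n 1/Y_j ≥ a n^{1/2} for all n and some a > 0, where each Y_j ≤ c j^{1/2} for a constant c > 0. Then ∑_{j=1}^n 1/Y_j^2 ≥ (a^2/4) log n for all n ≥ 2. -/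
open Finset

private lemma icc_to_range (h : ℕ → ℝ) (n : ℕ) :
    ∑ j ∈ Finset.Icc 1 n, h j = ∑ i ∈ Finset.range n, h (i + 1) := by
  rw [Finset.range_eq_Ico, Finset.sum_Ico_add' h 0 n (c := 1)]
  simp only [Nat.succ_eq_add_one, zero_add, Finset.Ico_add_one_right_eq_Icc]

private lemma sqrt_gap_s17 (i : ℕ) :
    (1:ℝ) / (2 * ((i:ℝ) + 2)) ≤ 1 - Real.sqrt ((i:ℝ) + 1) / Real.sqrt ((i:ℝ) + 2) := by
  set s := Real.sqrt ((i:ℝ)+1) with hsdef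
  set t := Real.sqrt ((i:ℝ)+2) with htdef
  have h1 : (0:ℝ) < (i:ℝ)+1 := by positivity
  have h2 : (0:ℝ) < (i:ℝ)+2 := by positivity
  have hs : 0 < s := Real.sqrt_pos.2 h1
  have ht : 0 < t := Real.sqrt_pos.2 h2
  have hst : s ≤ t := Real.sqrt_le_sqrt (by linarith)
  have hs2 : s^2 = (i:ℝ)+1 := Real.sq_sqrt h1.le
  have ht2 : t^2 = (i:ℝ)+2 := Real.sq_sqrt h2.le
  have hrw : 1 - s / t = 1 / ((t + s) * t) := by
    rw [eq_div_iff (by positivity : (0:ℝ) < (t + s) * t).ne']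
    field_simp
    nlinarith [hs2, ht2]
  rw [hrw]
  apply one_div_le_one_div_of_le (by positivity)
  nlinarith [hs2, ht2, hst, hs.le]

private lemma abel_lb (x : ℕ → ℝ) (a : ℝ) (ha : 0 < a)
    (hS : ∀ k : ℕ, 1 ≤ k → a * Real.sqrt k ≤ ∑ i ∈ Finset.range k, x (i+1))
    (n : ℕ) (hn : 1 ≤ n) :
    a * (1 + ∑ i ∈ Finset.range n, (1:ℝ)/((i:ℝ)+1)) / 2
      ≤ ∑ i ∈ Finset.range n, x (i+1) / Real.sqrt ((i:ℝ)+1) := by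
  obtain ⟨m, rfl⟩ : ∃ m, n = m + 1 := ⟨n-1, (Nat.succ_pred_eq_of_pos hn).symm⟩
  set f : ℕ → ℝ := fun i => 1 / Real.sqrt ((i:ℝ)+1) with hf
  set g : ℕ → ℝ := fun i => x (i+1) with hg
  have habel := Finset.sum_range_by_parts f g (m+1)
  simp only [smul_eq_mul, Nat.add_sub_cancel] at habel
  have hlhs : ∑ i ∈ Finset.range (m+1), x (i+1) / Real.sqrt ((i:ℝ)+1)
      = ∑ i ∈ Finset.range (m+1), f i * g i := by
    refine Finset.sum_congr rfl fun i _ => ?_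
    simp [hf, hg, div_eq_mul_inv, mul_comm]
  rw [hlhs, habel]
  -- first term:
  have hsq : (0:ℝ) < Real.sqrt ((m:ℝ)+1) := Real.sqrt_pos.2 (by positivity)
  have hterm1 : a ≤ f m * ∑ i ∈ Finset.range (m+1), g i := by
    have hGS : a * Real.sqrt ((m:ℝ)+1) ≤ ∑ i ∈ Finset.range (m+1), g i := by
      have := hS (m+1) (by omega)
      simpa [hg] using this
    have : f m * (a * Real.sqrt ((m:ℝ)+1)) ≤ f m * ∑ i ∈ Finset.range (m+1), g i :=
      mul_le_mul_of_nonneg_left hGS (by positivity)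
    calc a = f m * (a * Real.sqrt ((m:ℝ)+1)) := by
              field_simp [hf]
              simp [hf, hsq.ne']
      _ ≤ _ := this
  -- the sum term: ∑ (f(i+1)-f i) * G(i+1) ≤ -(a/2) * ∑ 1/(i+2)
  have hterm2 : ∑ i ∈ Finset.range m, (f (i+1) - f i) * ∑ j ∈ Finset.range (i+1), g j
      ≤ -(a/2) * ∑ i ∈ Finset.range m, (1:ℝ)/((i:ℝ)+2) := by
    have hpt : ∀ i ∈ Finset.range m, (f (i+1) - f i) * ∑ j ∈ Finset.range (i+1), g j
        ≤ -(a/2) * ((1:ℝ)/((i:ℝ)+2)) := by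
      intro i _
      have hGi : a * Real.sqrt ((i:ℝ)+1) ≤ ∑ j ∈ Finset.range (i+1), g j := by
        have := hS (i+1) (by omega)
        simpa [hg] using this
      have hfi : f (i+1) ≤ f i := by
        apply one_div_le_one_div_of_le (Real.sqrt_pos.2 (by positivity))
        apply Real.sqrt_le_sqrt
        push_cast; linarith
      have h1 : (f (i+1) - f i) * ∑ j ∈ Finset.range (i+1), g j
          ≤ (f (i+1) - f i) * (a * Real.sqrt ((i:ℝ)+1)) :=
        mul_le_mul_of_nonpos_left hGi (by linarith)
      refine h1.trans ?_
      have hkey : a * (1 / (2 * ((i:ℝ) + 2)))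
          ≤ a * (1 - Real.sqrt ((i:ℝ)+1) / Real.sqrt ((i:ℝ)+2)) :=
        mul_le_mul_of_nonneg_left (sqrt_gap_s17 i) ha.le
      have hkey' : a/2 * ((1:ℝ)/((i:ℝ)+2))
          ≤ a * (1 - Real.sqrt ((i:ℝ)+1) / Real.sqrt ((i:ℝ)+2)) := by
        calc a/2 * ((1:ℝ)/((i:ℝ)+2)) = a * (1 / (2 * ((i:ℝ) + 2))) := by
              rw [mul_one_div, mul_one_div, div_div]
          _ ≤ _ := hkey
      have hs1 : (0:ℝ) < Real.sqrt ((i:ℝ)+1) := Real.sqrt_pos.2 (by positivity)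
      have hs2 : (0:ℝ) < Real.sqrt ((i:ℝ)+2) := Real.sqrt_pos.2 (by positivity)
      have heq : (f (i+1) - f i) * (a * Real.sqrt ((i:ℝ)+1))
          = -(a * (1 - Real.sqrt ((i:ℝ)+1) / Real.sqrt ((i:ℝ)+2))) := by
        simp only [hf]
        have hcast : ((i:ℝ)+1)+1 = (i:ℝ)+2 := by push_cast; ring
        push_cast
        rw [hcast]
        field_simp
        ring
      rw [heq]
      linarith [hkey']
    calc ∑ i ∈ Finset.range m, (f (i+1) - f i) * ∑ j ∈ Finset.range (i+1), g j
        ≤ ∑ i ∈ Finset.range m, -(a/2) * ((1:ℝ)/((i:ℝ)+2)) := Finset.sum_le_sum hpt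
      _ = -(a/2) * ∑ i ∈ Finset.range m, (1:ℝ)/((i:ℝ)+2) := by rw [Finset.mul_sum]
  -- combine
  have hHsplit : ∑ i ∈ Finset.range (m+1), (1:ℝ)/((i:ℝ)+1)
      = 1 + ∑ i ∈ Finset.range m, (1:ℝ)/((i:ℝ)+2) := by
    rw [Finset.sum_range_succ' (fun i => (1:ℝ)/((i:ℝ)+1)) m, add_comm]
    congr 1
    · norm_num
    · refine Finset.sum_congr rfl fun i _ => ?_
      push_cast
      ring_nf
  rw [hHsplit]
  set P := ∑ i ∈ Finset.range m, (1:ℝ)/((i:ℝ)+2)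
  calc a * (1 + (1 + P)) / 2 = a + a/2 * P := by ring
    _ ≤ _ := by linarith [hterm1, hterm2]

/-- If `Y j` are positive reals with `∑_{j=1}^n 1/(Y j) ≥ a √n` for all `n` (with `a > 0`)
and `Y j ≤ c √j` for a constant `c > 0`, then `∑_{j=1}^n 1/(Y j)^2 ≥ (a^2/4) log n`
for all `n ≥ 2`. -/
theorem stmt17 (Y : ℕ → ℝ) (hY : ∀ j, 1 ≤ j → 0 < Y j) (a c : ℝ) (ha : 0 < a) (hc : 0 < c)
    (hbd : ∀ j : ℕ, 1 ≤ j → Y j ≤ c * Real.sqrt j)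
    (hS : ∀ n : ℕ, 1 ≤ n → a * Real.sqrt n ≤ ∑ j ∈ Finset.Icc 1 n, 1 / Y j) :
    ∀ n : ℕ, 2 ≤ n → a ^ 2 / 4 * Real.log n ≤ ∑ j ∈ Finset.Icc 1 n, 1 / (Y j) ^ 2 := by
  intro n hn
  have hn1 : 1 ≤ n := by omega
  set x : ℕ → ℝ := fun j => 1 / Y j with hx
  have hS' : ∀ k : ℕ, 1 ≤ k → a * Real.sqrt k ≤ ∑ i ∈ Finset.range k, x (i+1) := by
    intro k hk
    have := hS k hk
    rwa [icc_to_range x k] at this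
  set H : ℝ := ∑ i ∈ Finset.range n, (1:ℝ)/((i:ℝ)+1) with hH
  have hHharm : (harmonic n : ℝ) = H := by
    rw [harmonic]
    push_cast
    refine Finset.sum_congr rfl fun i _ => ?_
    rw [one_div]
  have hHle : H ≤ 1 + Real.log n := by
    rw [← hHharm]; exact harmonic_le_one_add_log n
  have hlogle : Real.log n ≤ H := by
    rw [← hHharm]
    calc Real.log n ≤ Real.log (n+1) := by
          apply Real.log_le_log (by positivity)
          push_cast; linarith
      _ = Real.log ((n:ℕ)+1 : ℕ) := by push_cast; ring_nf
      _ ≤ _ := log_add_one_le_harmonic n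
  have hlogpos : 0 < Real.log n := by
    apply Real.log_pos
    exact_mod_cast by omega
  have hHpos : 0 < H := lt_of_lt_of_le hlogpos hlogle
  set T : ℝ := ∑ i ∈ Finset.range n, x (i+1) / Real.sqrt ((i:ℝ)+1) with hT
  have hTlb : a * (1 + H) / 2 ≤ T := abel_lb x a ha hS' n hn1
  -- Cauchy-Schwarz
  set Q : ℝ := ∑ i ∈ Finset.range n, (x (i+1))^2 with hQ
  have hCS : T^2 ≤ Q * H := by
    have := Finset.sum_mul_sq_le_sq_mul_sq (Finset.range n)
      (fun i => x (i+1)) (fun i => 1 / Real.sqrt ((i:ℝ)+1))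
    have hr : ∑ i ∈ Finset.range n, x (i+1) * (1 / Real.sqrt ((i:ℝ)+1)) = T := by
      refine Finset.sum_congr rfl fun i _ => ?_
      rw [mul_one_div]
    have hr2 : ∑ i ∈ Finset.range n, (1 / Real.sqrt ((i:ℝ)+1))^2 = H := by
      refine Finset.sum_congr rfl fun i _ => ?_
      rw [div_pow, one_pow, Real.sq_sqrt (by positivity)]
    rw [hr, hr2] at this
    exact this
  have hQeq : ∑ j ∈ Finset.Icc 1 n, 1 / (Y j) ^ 2 = Q := by
    rw [icc_to_range (fun j => 1 / (Y j)^2) n]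
    refine Finset.sum_congr rfl fun i _ => ?_
    simp [hx, div_pow]
  rw [hQeq]
  have hTpos : 0 < a * (1 + H) / 2 := by positivity
  have h1L : 0 < 1 + Real.log n := by linarith
  calc a^2/4 * Real.log n ≤ a^2/4 * (1 + Real.log n) := by nlinarith
    _ = (a * (1 + Real.log n) / 2)^2 / (1 + Real.log n) := by field_simp; ring
    _ ≤ T^2 / H := by
        apply div_le_div₀ (sq_nonneg T) ?_ hHpos hHle
        have h1 : a * (1 + Real.log n) / 2 ≤ a * (1 + H) / 2 := by nlinarith
        have h2 : 0 ≤ a * (1 + Real.log n) / 2 := by positivity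
        nlinarith [hTlb, h1, h2]
    _ ≤ Q := by
        rw [div_le_iff₀ hHpos]
        exact hCS
end
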